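/- Let (Ω, Σ, μ) be a semifinite measure space with μ ≠ 0, let 𝒰 be an ultrafilter on the measure algebra of (Ω, μ), and let f, g : Ω → ℂ be measurable and essentially bounded with lim_𝒰 f = a and lim_𝒰 g = b. Then lim_𝒰 (f·g) = a·b. -/

import Mathlib

open MeasureTheory

/-- An *ultrafilter on the measure algebra* of `(Ω, μ)`: a collection of measurable,
non-null subsets of `Ω`, closed under intersection and under almost-everywhere
enlargement, containing every measurable set or its complement. -/
structure IsMeasureUltrafilter {Ω : Type*} [MeasurableSpace Ω] (μ : Measure Ω)
    (U : Set (Set Ω)) : Prop where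
  measurableSet_of_mem : ∀ F ∈ U, MeasurableSet F
  not_null : ∀ F ∈ U, μ F ≠ 0
  inter_mem : ∀ F ∈ U, ∀ G ∈ U, F ∩ G ∈ U
  mem_of_ae_subset : ∀ F ∈ U, ∀ G : Set Ω, MeasurableSet G → μ (F \ G) = 0 → G ∈ U
  mem_or_compl_mem : ∀ F : Set Ω, MeasurableSet F → F ∈ U ∨ Fᶜ ∈ U

/-- `UltraLim μ U f a` means `lim_U f = a`: for every `ε > 0` there is `F ∈ U` such that
all averages of `f` over measurable subsets of `F` of finite positive measure are within
`ε` of `a`. -/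
def UltraLim {Ω : Type*} [MeasurableSpace Ω] (μ : Measure Ω) (U : Set (Set Ω))
    (f : Ω → ℂ) (a : ℂ) : Prop :=
  ∀ ε : ℝ, 0 < ε → ∃ F ∈ U, ∀ X : Set Ω, X ⊆ F → MeasurableSet X →
    0 < μ X → μ X < ⊤ → ‖(μ X).toReal⁻¹ • ∫ x in X, f x ∂μ - a‖ < ε

/-- A measure is *semifinite* if every measurable set of infinite measure contains a
measurable subset of finite positive measure. -/
def Semifinite {Ω : Type*} [MeasurableSpace Ω] (μ : Measure Ω) : Prop :=
  ∀ E : Set Ω, MeasurableSet E → μ E = ⊤ →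
    ∃ F : Set Ω, F ⊆ E ∧ MeasurableSet F ∧ 0 < μ F ∧ μ F < ⊤

universe u

/-- A measure is *decomposable* if there is a partition of `Ω` into measurable sets of
finite measure which detects measurability and along which `μ` sums. -/
def Decomposable {Ω : Type u} [MeasurableSpace Ω] (μ : Measure Ω) : Prop :=
  ∃ (ι : Type u) (P : ι → Set Ω),
    (∀ i, MeasurableSet (P i)) ∧ (∀ i, μ (P i) < ⊤) ∧
    (Pairwise fun i j => Disjoint (P i) (P j)) ∧
    (⋃ i, P i) = Set.univ ∧
    (∀ E : Set Ω, (∀ i, MeasurableSet (E ∩ P i)) → MeasurableSet E) ∧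
    (∀ E : Set Ω, MeasurableSet E → μ E = ∑' i, μ (E ∩ P i))

section Aux

variable {Ω : Type*} [MeasurableSpace Ω] {μ : Measure Ω} {U : Set (Set Ω)}

/-- Ultrafilter splits unions. -/
lemma IsMeasureUltrafilter.union_split (hU : IsMeasureUltrafilter μ U)
    {A B : Set Ω} (hA : MeasurableSet A) (hB : MeasurableSet B)
    (hAB : A ∪ B ∈ U) : A ∈ U ∨ B ∈ U := by
  rcases hU.mem_or_compl_mem A hA with h | h
  · exact Or.inl h
  · right
    have hmem : (A ∪ B) ∩ Aᶜ ∈ U := hU.inter_mem _ hAB _ h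
    refine hU.mem_of_ae_subset _ hmem B hB ?_
    have : ((A ∪ B) ∩ Aᶜ) \ B = ∅ := by
      ext x; simp only [Set.mem_diff, Set.mem_inter_iff, Set.mem_union, Set.mem_compl_iff,
        Set.mem_empty_iff_false, iff_false]
      tauto
    simp [this]

/-- integrability of an a.e.-bounded measurable function on a finite-measure set. -/
lemma integrableOn_of_bdd {f : Ω → ℂ} (hf : Measurable f) {C : ℝ}
    (hbdd : ∀ᵐ ω ∂μ, ‖f ω‖ ≤ C) {X : Set Ω} (hX : μ X < ⊤) :
    IntegrableOn f X μ := by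
  have : IsFiniteMeasure (μ.restrict X) :=
    ⟨by simpa [Measure.restrict_apply_univ] using hX⟩
  exact (integrable_const C).mono' hf.aestronglyMeasurable.restrict
    (ae_restrict_of_ae hbdd)

lemma avg_sub_eq {f : Ω → ℂ} {a : ℂ} {X : Set Ω}
    (hfi : IntegrableOn f X μ) (h0 : 0 < μ X) (h1 : μ X < ⊤) :
    (μ X).toReal⁻¹ • ∫ x in X, f x ∂μ - a
      = (μ X).toReal⁻¹ • ∫ x in X, (f x - a) ∂μ := by
  have ht : (μ X).toReal ≠ 0 := by
    simp [ENNReal.toReal_eq_zero_iff, h0.ne', h1.ne]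
  rw [integral_sub hfi (integrableOn_const h1.ne), setIntegral_const, measureReal_def, smul_sub,
    smul_smul, inv_mul_cancel₀ ht, one_smul]

/-- Core: a set on which averages of `f` stay `c`-far from `a` cannot lie in `U`. -/
lemma core_not_mem (hsemi : Semifinite μ) (hU : IsMeasureUltrafilter μ U)
    {f : Ω → ℂ} {a : ℂ} (ha : UltraLim μ U f a) {S : Set Ω} {c : ℝ} (hc : 0 < c)
    (hbig : ∀ X : Set Ω, X ⊆ S → MeasurableSet X → 0 < μ X → μ X < ⊤ →
      c ≤ ‖(μ X).toReal⁻¹ • ∫ x in X, f x ∂μ - a‖) : S ∉ U := by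
  intro hSU
  obtain ⟨F, hF, hFprop⟩ := ha c hc
  have hT : F ∩ S ∈ U := hU.inter_mem F hF S hSU
  have hTm : MeasurableSet (F ∩ S) := hU.measurableSet_of_mem _ hT
  have hT0 : 0 < μ (F ∩ S) := pos_iff_ne_zero.2 (hU.not_null _ hT)
  obtain ⟨X, hXsub, hXm, hX0, hX1⟩ :
      ∃ X : Set Ω, X ⊆ F ∩ S ∧ MeasurableSet X ∧ 0 < μ X ∧ μ X < ⊤ := by
    rcases eq_or_ne (μ (F ∩ S)) ⊤ with h | h
    · exact hsemi _ hTm h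
    · exact ⟨F ∩ S, le_rfl, hTm, hT0, lt_top_iff_ne_top.2 h⟩
  have h1 := hFprop X (hXsub.trans Set.inter_subset_left) hXm hX0 hX1
  have h2 := hbig X (hXsub.trans Set.inter_subset_right) hXm hX0 hX1
  linarith

/-- Key lemma: if `lim_U f = a` then the set where `f` is `ε`-close to `a` lies in `U`. -/
lemma closeSet_mem (hsemi : Semifinite μ) (hU : IsMeasureUltrafilter μ U)
    {f : Ω → ℂ} (hf : Measurable f) (hfbdd : ∃ C : ℝ, ∀ᵐ ω ∂μ, ‖f ω‖ ≤ C)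
    {a : ℂ} (ha : UltraLim μ U f a) {ε : ℝ} (hε : 0 < ε) :
    {ω | ‖f ω - a‖ ≤ ε} ∈ U := by
  obtain ⟨C, hC⟩ := hfbdd
  -- sector sets
  set S : ℂ → Set Ω := fun w => {ω | ε / 2 ≤ (w * (f ω - a)).re} with hSdef
  have hSm : ∀ w : ℂ, MeasurableSet (S w) := by
    intro w
    exact measurableSet_le measurable_const
      (Complex.measurable_re.comp ((hf.sub measurable_const).const_mul w))
  -- each sector is not in U
  have hSnot : ∀ w : ℂ, ‖w‖ = 1 → S w ∉ U := by
    intro w hw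
    refine core_not_mem hsemi hU ha (half_pos hε) ?_
    intro X hXS hXm hX0 hX1
    have hfi : IntegrableOn f X μ := integrableOn_of_bdd hf hC hX1
    have hfi' : IntegrableOn (fun x => f x - a) X μ :=
      hfi.sub (integrableOn_const hX1.ne)
    have ht : (0:ℝ) < (μ X).toReal := ENNReal.toReal_pos hX0.ne' hX1.ne
    rw [avg_sub_eq hfi hX0 hX1]
    set I := ∫ x in X, (f x - a) ∂μ with hIdef
    have key : ε / 2 * (μ X).toReal ≤ (w * I).re := by
      have hint : IntegrableOn (fun x => (w * (f x - a)).re) X μ := by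
        simpa [IntegrableOn] using (hfi'.const_mul w).re
      calc ε / 2 * (μ X).toReal ≤ ∫ x in X, (w * (f x - a)).re ∂μ :=
            setIntegral_ge_of_const_le_real hXm hX1.ne (fun x hx => hXS hx) hint
        _ = (∫ x in X, w * (f x - a) ∂μ).re := by
            simpa using integral_re (hfi'.const_mul w)
        _ = (w * I).re := by rw [hIdef, integral_const_mul]
    have hre : ε / 2 ≤ (w * ((μ X).toReal⁻¹ • I)).re := by
      have heq : (w * ((μ X).toReal⁻¹ • I)).re = (μ X).toReal⁻¹ * (w * I).re := by
        rw [mul_smul_comm, Complex.real_smul, Complex.mul_re]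
        simp
      rw [heq]
      calc ε / 2 = (μ X).toReal⁻¹ * (ε / 2 * (μ X).toReal) := by field_simp
        _ ≤ (μ X).toReal⁻¹ * (w * I).re :=
            mul_le_mul_of_nonneg_left key (inv_nonneg.2 ht.le)
    calc ε / 2 ≤ (w * ((μ X).toReal⁻¹ • I)).re := hre
      _ ≤ ‖w * ((μ X).toReal⁻¹ • I)‖ := by
          exact Complex.re_le_norm _
      _ = ‖(μ X).toReal⁻¹ • I‖ := by rw [norm_mul, hw, one_mul]
  -- now assemble
  have hEm : MeasurableSet {ω | ‖f ω - a‖ ≤ ε} :=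
    measurableSet_le ((hf.sub measurable_const).norm) measurable_const
  rcases hU.mem_or_compl_mem _ hEm with h | h
  · exact h
  · exfalso
    have hsub : {ω | ‖f ω - a‖ ≤ ε}ᶜ ⊆ (S 1 ∪ S (-1)) ∪ (S (-Complex.I) ∪ S Complex.I) := by
      intro ω hω
      simp only [Set.mem_compl_iff, Set.mem_setOf_eq, not_le] at hω
      set z := f ω - a with hz
      by_contra hcon
      simp only [Set.mem_union, hSdef, Set.mem_setOf_eq, not_or, not_le, Complex.mul_re,
        Complex.one_re, Complex.one_im, Complex.neg_re, Complex.neg_im, Complex.I_re,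
        Complex.I_im] at hcon
      have hnorm : ‖z‖ ≤ |z.re| + |z.im| := Complex.norm_le_abs_re_add_abs_im z
      have h1 : |z.re| < ε / 2 := by rw [abs_lt]; constructor <;> nlinarith [hcon.1.1, hcon.1.2]
      have h2 : |z.im| < ε / 2 := by rw [abs_lt]; constructor <;> nlinarith [hcon.2.1, hcon.2.2]
      linarith
    have hunion : (S 1 ∪ S (-1)) ∪ (S (-Complex.I) ∪ S Complex.I) ∈ U := by
      refine hU.mem_of_ae_subset _ h _ ?_ ?_
      · exact (((hSm 1).union (hSm (-1))).union ((hSm (-Complex.I)).union (hSm Complex.I)))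
      · rw [Set.diff_eq_empty.2 hsub]; exact measure_empty
    rcases hU.union_split ((hSm 1).union (hSm (-1)))
        ((hSm (-Complex.I)).union (hSm Complex.I)) hunion with h' | h'
    · rcases hU.union_split (hSm 1) (hSm (-1)) h' with h'' | h''
      · exact hSnot 1 (by simp) h''
      · exact hSnot (-1) (by simp) h''
    · rcases hU.union_split (hSm (-Complex.I)) (hSm Complex.I) h' with h'' | h''
      · exact hSnot (-Complex.I) (by simp) h''
      · exact hSnot Complex.I (by simp) h''

end Aux

/-- Theorem II.5. Ultrafilter limits are multiplicative:
the limit of a product is the product of the limits. -/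
theorem ultraLim_mul {Ω : Type u} [MeasurableSpace Ω] (μ : Measure Ω)
    (hμ : μ ≠ 0) (hsemi : Semifinite μ)
    (U : Set (Set Ω)) (hU : IsMeasureUltrafilter μ U)
    (f g : Ω → ℂ) (hf : Measurable f) (hfbdd : ∃ C : ℝ, ∀ᵐ ω ∂μ, ‖f ω‖ ≤ C)
    (hg : Measurable g) (hgbdd : ∃ C : ℝ, ∀ᵐ ω ∂μ, ‖g ω‖ ≤ C)
    (a b : ℂ) (ha : UltraLim μ U f a) (hb : UltraLim μ U g b) :
    UltraLim μ U (fun ω => f ω * g ω) (a * b) := by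
  intro ε hε
  set δ : ℝ := min 1 (ε / (2 * (‖a‖ + ‖b‖ + 1))) with hδdef
  have hden : (0:ℝ) < 2 * (‖a‖ + ‖b‖ + 1) := by positivity
  have hδ0 : 0 < δ := lt_min one_pos (div_pos hε hden)
  have hδ1 : δ ≤ 1 := min_le_left _ _
  have hδ2 : δ * (2 * (‖a‖ + ‖b‖ + 1)) ≤ ε := by
    have := min_le_right 1 (ε / (2 * (‖a‖ + ‖b‖ + 1)))
    rw [← hδdef] at this
    exact (le_div_iff₀ hden).1 this
  have hEf : {ω | ‖f ω - a‖ ≤ δ} ∈ U := closeSet_mem hsemi hU hf hfbdd ha hδ0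
  have hEg : {ω | ‖g ω - b‖ ≤ δ} ∈ U := closeSet_mem hsemi hU hg hgbdd hb hδ0
  refine ⟨_, hU.inter_mem _ hEf _ hEg, ?_⟩
  intro X hXsub hXm hX0 hX1
  have ht : (0:ℝ) < (μ X).toReal := ENNReal.toReal_pos hX0.ne' hX1.ne
  have hmem : ∀ x ∈ X, ‖f x - a‖ ≤ δ ∧ ‖g x - b‖ ≤ δ := fun x hx => hXsub hx
  have hpt : ∀ x ∈ X, ‖f x * g x - a * b‖ ≤ ε / 2 := by
    intro x hx
    obtain ⟨hx1, hx2⟩ := hmem x hx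
    have hfa : ‖f x‖ ≤ ‖a‖ + δ := by
      have := norm_sub_norm_le (f x) a
      linarith
    have hre : f x * g x - a * b = f x * (g x - b) + (f x - a) * b := by ring
    rw [hre]
    have hna := norm_nonneg a
    have hnb := norm_nonneg b
    have hnfx := norm_nonneg (f x)
    have hgb := norm_nonneg (g x - b)
    calc ‖f x * (g x - b) + (f x - a) * b‖
        ≤ ‖f x * (g x - b)‖ + ‖(f x - a) * b‖ := norm_add_le _ _
      _ = ‖f x‖ * ‖g x - b‖ + ‖f x - a‖ * ‖b‖ := by rw [norm_mul, norm_mul]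
      _ ≤ (‖a‖ + δ) * δ + δ * ‖b‖ := by
          gcongr
      _ ≤ ε / 2 := by nlinarith
  have hfgint : IntegrableOn (fun x => f x * g x) X μ := by
    have : IsFiniteMeasure (μ.restrict X) :=
      ⟨by simpa [Measure.restrict_apply_univ] using hX1⟩
    refine (integrable_const ((‖a‖ + δ) * (‖b‖ + δ))).mono'
      ((hf.mul hg).aestronglyMeasurable.restrict) ?_
    refine (ae_restrict_iff' hXm).2 (ae_of_all _ ?_)
    intro x hx
    obtain ⟨hx1, hx2⟩ := hmem x hx
    have hfa : ‖f x‖ ≤ ‖a‖ + δ := by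
      have := norm_sub_norm_le (f x) a
      linarith
    have hgb : ‖g x‖ ≤ ‖b‖ + δ := by
      have := norm_sub_norm_le (g x) b
      linarith
    calc ‖f x * g x‖ = ‖f x‖ * ‖g x‖ := norm_mul _ _
      _ ≤ (‖a‖ + δ) * (‖b‖ + δ) := by
          have hna := norm_nonneg a
          have := norm_nonneg (f x)
          gcongr <;> positivity
  rw [avg_sub_eq hfgint hX0 hX1]
  have hbound : ‖∫ x in X, (f x * g x - a * b) ∂μ‖ ≤ ε / 2 * (μ X).toReal :=
    norm_setIntegral_le_of_norm_le_const hX1 hpt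
  calc ‖(μ X).toReal⁻¹ • ∫ x in X, (f x * g x - a * b) ∂μ‖
      = (μ X).toReal⁻¹ * ‖∫ x in X, (f x * g x - a * b) ∂μ‖ := by
        rw [norm_smul, Real.norm_eq_abs, abs_of_pos (inv_pos.2 ht)]
    _ ≤ (μ X).toReal⁻¹ * (ε / 2 * (μ X).toReal) :=
        mul_le_mul_of_nonneg_left hbound (inv_nonneg.2 ht.le)
    _ = ε / 2 := by field_simp
    _ < ε := by linarith
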